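/- Fix n ≥ 1, positive reals c₀ and ε, and for each i ∈ {1,…,n} positive reals ξᵢ, γᵢ, hᵢ, and σ̃ > 0. Let G(κ, z) = ∑_{i=1}^n κᵢ zᵢ γᵢ² hᵢ² / (zᵢ hᵢ² + κᵢ σ̃²) (with the convention that a term equals 0 when κᵢ = zᵢ = 0) and consider the feasible set E = {(κ, z) ∈ ℝⁿ × ℝⁿ : κᵢ ≥ 0, zᵢ ≥ 0 for all i and G(κ, z) ≥ ε}. Then the infimum of the cost c₀·∑ᵢ κᵢ + ∑ᵢ ξᵢ zᵢ over E equals ε · minᵢ (σ̃·√ξᵢ + hᵢ·√c₀)²/(γᵢ² hᵢ²), and it is attained at the single-user allocation in which, for an index j achieving the minimum, κⱼ = (ε/γⱼ²)·(1 + (σ̃/hⱼ)·√(ξⱼ/c₀)), zⱼ = (ε σ̃²/(γⱼ² hⱼ²))·(1 + (hⱼ/σ̃)·√(c₀/ξⱼ)), and κᵢ = zᵢ = 0 for all i ≠ j. -/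

import Mathlib

open Finset

/-- Sensing deflection `G(κ, z) = ∑ᵢ κᵢ zᵢ γᵢ² hᵢ² / (zᵢ hᵢ² + κᵢ σ̃²)`,
with the convention that a term equals `0` when `κᵢ = zᵢ = 0`. -/
noncomputable def deflection (n : ℕ) (σ : ℝ) (γ h : Fin n → ℝ)
    (κ z : Fin n → ℝ) : ℝ :=
  ∑ i, if κ i = 0 ∧ z i = 0 then 0
    else κ i * z i * (γ i) ^ 2 * (h i) ^ 2 / (z i * (h i) ^ 2 + κ i * σ ^ 2)

lemma key_ineq (c₀ ξi γi hi σ : ℝ) (hc₀ : 0 < c₀) (hξ : 0 < ξi) (hγ : 0 < γi)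
    (hh : 0 < hi) (hσ : 0 < σ) (a b : ℝ) (ha : 0 ≤ a) (hb : 0 ≤ b) :
    (σ * Real.sqrt ξi + hi * Real.sqrt c₀) ^ 2 / (γi ^ 2 * hi ^ 2) *
      (if a = 0 ∧ b = 0 then 0
        else a * b * γi ^ 2 * hi ^ 2 / (b * hi ^ 2 + a * σ ^ 2))
      ≤ c₀ * a + ξi * b := by
  split_ifs with hcase
  · simp only [mul_zero]
    positivity
  · have hD : 0 < b * hi ^ 2 + a * σ ^ 2 := by
      rcases not_and_or.mp hcase with h1 | h1
      · have : 0 < a := ha.lt_of_ne (Ne.symm h1)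
        positivity
      · have : 0 < b := hb.lt_of_ne (Ne.symm h1)
        positivity
    set P := Real.sqrt ξi with hP
    set Q := Real.sqrt c₀ with hQ
    have hp2 : P ^ 2 = ξi := Real.sq_sqrt hξ.le
    have hq2 : Q ^ 2 = c₀ := Real.sq_sqrt hc₀.le
    rw [div_mul_div_comm, div_le_iff₀ (by positivity), ← hp2, ← hq2]
    nlinarith [sq_nonneg (γi * hi * (a * σ * Q - b * hi * P))]

lemma term_nonneg (γi hi σ : ℝ) (hγ : 0 < γi) (hh : 0 < hi) (hσ : 0 < σ)
    (a b : ℝ) (ha : 0 ≤ a) (hb : 0 ≤ b) :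
    0 ≤ (if a = 0 ∧ b = 0 then 0
      else a * b * γi ^ 2 * hi ^ 2 / (b * hi ^ 2 + a * σ ^ 2)) := by
  split_ifs with hcase
  · exact le_rfl
  · have hD : 0 < b * hi ^ 2 + a * σ ^ 2 := by
      rcases not_and_or.mp hcase with h1 | h1
      · have : 0 < a := ha.lt_of_ne (Ne.symm h1)
        positivity
      · have : 0 < b := hb.lt_of_ne (Ne.symm h1)
        positivity
    positivity

theorem stmt_8 (n : ℕ) (hn : 1 ≤ n) (c₀ ε σ : ℝ) (ξ γ h : Fin n → ℝ)
    (hc₀ : 0 < c₀) (hε : 0 < ε) (hσ : 0 < σ)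
    (hξ : ∀ i, 0 < ξ i) (hγ : ∀ i, 0 < γ i) (hh : ∀ i, 0 < h i)
    (r : Fin n → ℝ)
    (hr : ∀ i, r i = (σ * Real.sqrt (ξ i) + h i * Real.sqrt c₀) ^ 2 /
      ((γ i) ^ 2 * (h i) ^ 2))
    (j : Fin n) (hj : ∀ i, r j ≤ r i)
    (κopt zopt : Fin n → ℝ)
    (hκopt : κopt = fun i =>
      if i = j then (ε / (γ j) ^ 2) * (1 + (σ / h j) * Real.sqrt (ξ j / c₀))
      else 0)
    (hzopt : zopt = fun i =>
      if i = j then (ε * σ ^ 2 / ((γ j) ^ 2 * (h j) ^ 2)) *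
        (1 + (h j / σ) * Real.sqrt (c₀ / ξ j))
      else 0) :
    ((∀ i, 0 ≤ κopt i) ∧ (∀ i, 0 ≤ zopt i) ∧
      ε ≤ deflection n σ γ h κopt zopt) ∧
    c₀ * ∑ i, κopt i + ∑ i, ξ i * zopt i = ε * r j ∧
    (∀ κ z : Fin n → ℝ, (∀ i, 0 ≤ κ i) → (∀ i, 0 ≤ z i) →
      ε ≤ deflection n σ γ h κ z →
      ε * r j ≤ c₀ * ∑ i, κ i + ∑ i, ξ i * z i) := by
  have hγj := hγ j; have hhj := hh j; have hξj := hξ j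
  set p := Real.sqrt (ξ j) with hpdef
  set q := Real.sqrt c₀ with hqdef
  have hp0 : 0 < p := Real.sqrt_pos.mpr hξj
  have hq0 : 0 < q := Real.sqrt_pos.mpr hc₀
  have hp2 : p ^ 2 = ξ j := Real.sq_sqrt hξj.le
  have hq2 : q ^ 2 = c₀ := Real.sq_sqrt hc₀.le
  have hs1 : Real.sqrt (ξ j / c₀) = p / q := Real.sqrt_div hξj.le _
  have hs2 : Real.sqrt (c₀ / ξ j) = q / p := Real.sqrt_div hc₀.le _
  have hrj : 0 < r j := by rw [hr j]; positivity
  set A := (ε / (γ j) ^ 2) * (1 + (σ / h j) * Real.sqrt (ξ j / c₀)) with hAdef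
  set B := (ε * σ ^ 2 / ((γ j) ^ 2 * (h j) ^ 2)) *
      (1 + (h j / σ) * Real.sqrt (c₀ / ξ j)) with hBdef
  have hA : 0 < A := by rw [hAdef, hs1]; positivity
  have hB : 0 < B := by rw [hBdef, hs2]; positivity
  have hκv : ∀ i, κopt i = if i = j then A else 0 := by
    intro i; rw [hκopt]
  have hzv : ∀ i, zopt i = if i = j then B else 0 := by
    intro i; rw [hzopt]
  have hκnn : ∀ i, 0 ≤ κopt i := by
    intro i; rw [hκv i]; split_ifs; exacts [hA.le, le_refl 0]
  have hznn : ∀ i, 0 ≤ zopt i := by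
    intro i; rw [hzv i]; split_ifs; exacts [hB.le, le_refl 0]
  -- deflection at the optimal point equals ε
  have hdefl : deflection n σ γ h κopt zopt = ε := by
    rw [deflection]
    rw [Finset.sum_eq_single j]
    · rw [hκv j, hzv j]
      simp only [if_pos rfl, ↓reduceIte]
      rw [if_neg (by push_neg; intro hA0; exact absurd hA0 hA.ne')]
      rw [hAdef, hBdef, hs1, hs2]
      field_simp
      ring
    · intro i _ hij
      rw [hκv i, hzv i, if_neg hij, if_neg hij]
      simp
    · intro hj'; exact absurd (Finset.mem_univ j) hj'
  -- cost at the optimal point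
  have hcost : c₀ * ∑ i, κopt i + ∑ i, ξ i * zopt i = ε * r j := by
    have h1 : ∑ i, κopt i = A := by
      rw [Finset.sum_eq_single j]
      · rw [hκv j, if_pos rfl]
      · intro i _ hij; rw [hκv i, if_neg hij]
      · intro hj'; exact absurd (Finset.mem_univ j) hj'
    have h2 : ∑ i, ξ i * zopt i = ξ j * B := by
      rw [Finset.sum_eq_single j]
      · rw [hzv j, if_pos rfl]
      · intro i _ hij; rw [hzv i, if_neg hij, mul_zero]
      · intro hj'; exact absurd (Finset.mem_univ j) hj'
    rw [h1, h2, hAdef, hBdef, hs1, hs2, hr j, ← hp2, ← hq2]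
    field_simp
    rw [Real.sqrt_sq hp0.le]
    ring
  refine ⟨⟨hκnn, hznn, hdefl.ge⟩, hcost, ?_⟩
  -- optimality
  intro κ z hκ hz hG
  have hterm : ∀ i, r j * (if κ i = 0 ∧ z i = 0 then 0
      else κ i * z i * (γ i) ^ 2 * (h i) ^ 2 /
        (z i * (h i) ^ 2 + κ i * σ ^ 2)) ≤ c₀ * κ i + ξ i * z i := by
    intro i
    calc r j * _ ≤ r i * _ := by
          apply mul_le_mul_of_nonneg_right (hj i)
          exact term_nonneg (γ i) (h i) σ (hγ i) (hh i) hσ _ _ (hκ i) (hz i)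
      _ ≤ c₀ * κ i + ξ i * z i := by
          rw [hr i]
          exact key_ineq c₀ (ξ i) (γ i) (h i) σ hc₀ (hξ i) (hγ i) (hh i) hσ _ _
            (hκ i) (hz i)
  calc ε * r j = r j * ε := mul_comm _ _
    _ ≤ r j * deflection n σ γ h κ z := mul_le_mul_of_nonneg_left hG hrj.le
    _ = ∑ i, r j * (if κ i = 0 ∧ z i = 0 then 0
        else κ i * z i * (γ i) ^ 2 * (h i) ^ 2 /
          (z i * (h i) ^ 2 + κ i * σ ^ 2)) := by
        rw [deflection, Finset.mul_sum]
    _ ≤ ∑ i, (c₀ * κ i + ξ i * z i) := Finset.sum_le_sum (fun i _ => hterm i)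
    _ = c₀ * ∑ i, κ i + ∑ i, ξ i * z i := by
        rw [Finset.sum_add_distrib, Finset.mul_sum]
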